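/- Let Q be a simple binary join query, H ⊆ attset(Q), I the set of isolated attributes, and J a non-empty subset of I. Define Q̃ = {R ∈ Q : scheme(R) ∩ (I \ J) = ∅} and H̃ = H ∩ attset(Q̃). Then (i) for each configuration η ∈ config(Q, H), the restriction η̃ = η[H̃] belongs to config(Q̃, H̃) and Join(Q''_J(η)) = Join(Q̃''_isolated(η̃)), where Q̃''_isolated(η̃) is the query on the isolated attributes (which equal J) defined from Q̃ and H̃; and (ii) at most λ^{|H| − |H̃|} configurations η ∈ config(Q, H) have the same restriction η̃, so that Σ_{η ∈ config(Q, H)} |Join(Q''_J(η))| ≤ λ^{|H| − |H̃|} · Σ_{η̃ ∈ config(Q̃, H̃)} |Join(Q̃''_isolated(η̃))|. -/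
import Mathlib


open scoped BigOperators Classical

namespace BinaryJoins

/-! ### Hypergraphs, fractional edge coverings and packings

A hypergraph is given by a finite vertex set `V : Finset α` and a finite
edge set `E : Finset (Finset α)`.  A weight assignment is a function
`W : Finset α → ℝ` (only its values on `E` matter). -/

variable {α : Type} [DecidableEq α]

/-- The weight of a vertex `X`: the sum of the weights of all edges incident to `X`. -/
def vertexWeight (E : Finset (Finset α)) (W : Finset α → ℝ) (X : α) : ℝ :=
  ∑ e ∈ E.filter (fun e => X ∈ e), W e

/-- `W` is a fractional edge covering: edge weights lie in `[0,1]` and every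
vertex of `V` has weight at least 1. -/
def IsFracEdgeCover (V : Finset α) (E : Finset (Finset α)) (W : Finset α → ℝ) : Prop :=
  (∀ e ∈ E, 0 ≤ W e ∧ W e ≤ 1) ∧ ∀ X ∈ V, 1 ≤ vertexWeight E W X

/-- `W` is a fractional edge packing: edge weights lie in `[0,1]` and every
vertex of `V` has weight at most 1. -/
def IsFracEdgePack (V : Finset α) (E : Finset (Finset α)) (W : Finset α → ℝ) : Prop :=
  (∀ e ∈ E, 0 ≤ W e ∧ W e ≤ 1) ∧ ∀ X ∈ V, vertexWeight E W X ≤ 1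

/-- The fractional edge covering number `ρ`: the smallest total weight of a
fractional edge covering. -/
noncomputable def rho (V : Finset α) (E : Finset (Finset α)) : ℝ :=
  sInf {t | ∃ W : Finset α → ℝ, IsFracEdgeCover V E W ∧ t = ∑ e ∈ E, W e}

/-- The fractional edge packing number `τ`: the largest total weight of a
fractional edge packing. -/
noncomputable def tau (V : Finset α) (E : Finset (Finset α)) : ℝ :=
  sSup {t | ∃ W : Finset α → ℝ, IsFracEdgePack V E W ∧ t = ∑ e ∈ E, W e}

/-- A binary hypergraph: every edge is a 2-element subset of `V`, and every
vertex is incident to at least one edge. -/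
def BinaryHG (V : Finset α) (E : Finset (Finset α)) : Prop :=
  (∀ e ∈ E, e ⊆ V ∧ e.card = 2) ∧ ∀ X ∈ V, ∃ e ∈ E, X ∈ e


/-! ### Tuples, relations, and join queries

`dom` is the domain of values; a tuple over a set `U` of attributes is
represented as a function `att → Option dom` that is `some`-valued exactly
on `U`. -/

variable {att dom : Type}

/-- A (partial) tuple. -/
abbrev Tup (att dom : Type) := att → Option dom

/-- `u` is a tuple over the attribute set `U`. -/
def IsTupleOn (u : Tup att dom) (U : Set att) : Prop :=
  ∀ x : att, (u x).isSome ↔ x ∈ U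

/-- The projection (restriction) of a tuple on an attribute set `V`. -/
noncomputable def restrict (u : Tup att dom) (V : Set att) : Tup att dom :=
  fun x => if x ∈ V then u x else none

/-- A relation: a finite set of tuples over a common scheme. -/
structure Relation (att dom : Type) where
  scheme : Finset att
  tuples : Set (Tup att dom)
  finite : tuples.Finite
  wf : ∀ u ∈ tuples, IsTupleOn u ↑scheme

variable [DecidableEq att]

/-- A join query is a finite set of relations; `attset Q` is the set of all
attributes appearing in the schemes of its relations. -/
def attset (Q : Finset (Relation att dom)) : Finset att :=
  Q.biUnion fun R => R.scheme

/-- The result `Join(Q)` of a join query. -/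
def JoinQ (Q : Finset (Relation att dom)) : Set (Tup att dom) :=
  { u | IsTupleOn u ↑(attset Q) ∧ ∀ R ∈ Q, restrict u ↑R.scheme ∈ R.tuples }

/-- A query is simple if no two distinct relations share a scheme. -/
def SimpleQ (Q : Finset (Relation att dom)) : Prop :=
  ∀ R ∈ Q, ∀ S ∈ Q, R.scheme = S.scheme → R = S

/-- A query is binary if every relation's scheme has exactly two attributes. -/
def BinaryQ (Q : Finset (Relation att dom)) : Prop :=
  ∀ R ∈ Q, R.scheme.card = 2

/-- The input size `m` of a query. -/
noncomputable def inputSize (Q : Finset (Relation att dom)) : ℕ :=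
  ∑ R ∈ Q, R.tuples.ncard

/-- The edge set of the hypergraph defined by `Q` (its vertex set is `attset Q`). -/
def edgeSet (Q : Finset (Relation att dom)) : Finset (Finset att) :=
  Q.image fun R => R.scheme

/-! ### Heavy and light values -/

/-- Value `x` is heavy on attribute `X`: some relation of `Q` has at least
`m/λ` tuples carrying `x` on `X`. -/
def HeavyOn (Q : Finset (Relation att dom)) (lam : ℕ) (X : att) (x : dom) : Prop :=
  ∃ R ∈ Q, X ∈ R.scheme ∧
    (inputSize Q : ℝ) / (lam : ℝ) ≤ ({u ∈ R.tuples | u X = some x}.ncard : ℝ)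

/-- Value `x` is heavy (on some attribute). -/
def Heavy (Q : Finset (Relation att dom)) (lam : ℕ) (x : dom) : Prop :=
  ∃ X : att, HeavyOn Q lam X x

/-- Value `x` appears in at least one relation of `Q`. -/
def Appears (Q : Finset (Relation att dom)) (x : dom) : Prop :=
  ∃ R ∈ Q, ∃ X ∈ R.scheme, ∃ u ∈ R.tuples, u X = some x

/-- Value `x` appears on attribute `Y` in a relation of `Q`. -/
def AppearsOn (Q : Finset (Relation att dom)) (Y : att) (x : dom) : Prop :=
  ∃ R ∈ Q, Y ∈ R.scheme ∧ ∃ u ∈ R.tuples, u Y = some x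

/-! ### Configurations and residual queries

Below, `Hv : att → dom → Prop` is the "heavy" predicate (`Hv X x` meaning
that value `x` is heavy on attribute `X`); in applications it is
instantiated with `HeavyOn Q lam`. -/

/-- The set `config(Q, H)` of configurations of `H`: tuples over `H` whose
values are heavy. -/
def config (Hv : att → dom → Prop) (H : Finset att) : Set (Tup att dom) :=
  { η | IsTupleOn η ↑H ∧ ∀ X ∈ H, ∀ x : dom, η X = some x → Hv X x }

/-- The residual relation `R'ₑ(η)` (over `e \ H`) of the relation `R` with
scheme `e`, under configuration `η` of `H`: projections on `e \ H` of the
tuples of `R` that agree with `η` on `e ∩ H` and are light outside `H`. -/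
def ResidualTuples (Q : Finset (Relation att dom)) (Hv : att → dom → Prop)
    (H : Finset att) (η : Tup att dom) (R : Relation att dom) : Set (Tup att dom) :=
  { v | ∃ w ∈ R.tuples,
      (∀ X ∈ R.scheme ∩ H, w X = η X) ∧
      (∀ Y ∈ R.scheme \ H, ∀ y : dom, w Y = some y → ¬ Hv Y y ∧ Appears Q y) ∧
      v = restrict w ↑(R.scheme \ H) }

/-- The result of the residual query `Q'(η)`: tuples over `attset Q \ H`
whose projection on each active edge `e` belongs to `R'ₑ(η)`. -/
def JoinResidual (Q : Finset (Relation att dom)) (Hv : att → dom → Prop)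
    (H : Finset att) (η : Tup att dom) : Set (Tup att dom) :=
  { u | IsTupleOn u ↑(attset Q \ H) ∧
      ∀ R ∈ Q, (R.scheme \ H).Nonempty →
        restrict u ↑(R.scheme \ H) ∈ ResidualTuples Q Hv H η R }

/-- `m_η`: the total size of the relations of the residual query `Q'(η)`. -/
noncomputable def residualSize (Q : Finset (Relation att dom)) (Hv : att → dom → Prop)
    (H : Finset att) (η : Tup att dom) : ℕ :=
  ∑ R ∈ Q, if (R.scheme \ H).Nonempty then (ResidualTuples Q Hv H η R).ncard else 0

/-- Combine a tuple over a set disjoint from `H` with a configuration `η` over `H`. -/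
def combine (H : Finset att) (η u : Tup att dom) : Tup att dom :=
  fun x => if x ∈ H then η x else u x

/-! ### Cross edges, isolated attributes, and the semi-join reduction -/

/-- `e` is a cross edge w.r.t. `H`: it meets both `H` and its complement. -/
def IsCross (H : Finset att) (e : Finset att) : Prop :=
  (e ∩ H).Nonempty ∧ (e \ H).Nonempty

/-- The set `I` of isolated attributes: light attributes `X` such that `{X}`
is the only edge incident to `X` in the subgraph induced by the light
attributes `L = attset Q \ H`. -/
def isolatedSet (Q : Finset (Relation att dom)) (H : Finset att) : Finset att :=
  (attset Q \ H).filter fun X => ∀ R ∈ Q, X ∈ R.scheme → R.scheme \ H = {X}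

/-- The unary tuple over `{X}` carrying value `x`. -/
def singletonTup (X : att) (x : dom) : Tup att dom :=
  fun Y => if Y = X then some x else none

/-- `X` is a border attribute: a light attribute appearing in a cross edge. -/
def BorderAttr (Q : Finset (Relation att dom)) (H : Finset att) (X : att) : Prop :=
  X ∈ attset Q ∧ X ∉ H ∧ ∃ R ∈ Q, X ∈ R.scheme ∧ IsCross H R.scheme

/-- The set of values of the unary relation `R''_X(η)`: the intersection of
the residual relations `R'ₑ(η)` over all cross edges `e` containing `X`. -/
def Rpp (Q : Finset (Relation att dom)) (Hv : att → dom → Prop)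
    (H : Finset att) (η : Tup att dom) (X : att) : Set dom :=
  { x | ∀ R ∈ Q, IsCross H R.scheme → X ∈ R.scheme →
      singletonTup X x ∈ ResidualTuples Q Hv H η R }

/-- The cartesian product `Join(Q''_J(η))` of the unary relations `R''_X(η)`,
`X ∈ J` (for `J = I` this is `Join(Q''_isolated(η))`). -/
def JoinIso (Q : Finset (Relation att dom)) (Hv : att → dom → Prop)
    (H : Finset att) (η : Tup att dom) (J : Finset att) : Set (Tup att dom) :=
  { u | IsTupleOn u ↑J ∧ ∀ X ∈ J, ∀ x : dom, u X = some x → x ∈ Rpp Q Hv H η X }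

/-! ### The query `Q*` and its hypergraph -/

/-- The result `Join(Q*)` of the query `Q*`: tuples over `I ∪ H` that
(i) project into `R_e` for every cross edge `e` incident to `I`, (ii) take a
heavy value on every attribute of `H`, and (iii) take, on every `Y ∈ I`, a
value appearing on `Y` in a relation of `Q`. -/
def JoinStar (Q : Finset (Relation att dom)) (Hv : att → dom → Prop)
    (H : Finset att) : Set (Tup att dom) :=
  { t | IsTupleOn t ↑(isolatedSet Q H ∪ H) ∧
      (∀ R ∈ Q, IsCross H R.scheme → (R.scheme ∩ isolatedSet Q H).Nonempty →
        restrict t ↑R.scheme ∈ R.tuples) ∧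
      (∀ X ∈ H, ∀ x : dom, t X = some x → Hv X x) ∧
      (∀ Y ∈ isolatedSet Q H, ∀ y : dom, t Y = some y → AppearsOn Q Y y) }

/-- The edge set `E*` of the hypergraph `G*` of `Q*`: the cross edges of `G`
incident to `I`, a unary edge `{X}` for each `X ∈ H`, and a unary edge `{Y}`
for each `Y ∈ I`.  (Its vertex set is `V* = I ∪ H`.) -/
noncomputable def starEdges (Q : Finset (Relation att dom)) (H : Finset att) :
    Finset (Finset att) :=
  (edgeSet Q).filter (fun e => IsCross H e ∧ (e ∩ isolatedSet Q H).Nonempty)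
    ∪ H.image (fun X => {X}) ∪ (isolatedSet Q H).image (fun Y => {Y})

/-! ### The reduced query `Q''(η)` -/

/-- The reduced relation `R''ₑ(η)` of a light edge `e = scheme R`: the tuples
of `R'ₑ(η)` whose values on border attributes survive the semi-join
reduction. -/
def ReducedTuples (Q : Finset (Relation att dom)) (Hv : att → dom → Prop)
    (H : Finset att) (η : Tup att dom) (R : Relation att dom) : Set (Tup att dom) :=
  { u | u ∈ ResidualTuples Q Hv H η R ∧
      ∀ X ∈ R.scheme, BorderAttr Q H X → ∀ x : dom, u X = some x → x ∈ Rpp Q Hv H η X }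

/-- The result `Join(Q''_light(η))`: tuples over `L \ I` whose projection on
every light edge belongs to the corresponding reduced relation. -/
def JoinLight (Q : Finset (Relation att dom)) (Hv : att → dom → Prop)
    (H : Finset att) (η : Tup att dom) : Set (Tup att dom) :=
  { u | IsTupleOn u ↑((attset Q \ H) \ isolatedSet Q H) ∧
      ∀ R ∈ Q, R.scheme ∩ H = ∅ → restrict u ↑R.scheme ∈ ReducedTuples Q Hv H η R }

/-- The result `Join(Q''(η))` of the reduced query: tuples over `L` whose
projections on light edges are in the reduced relations and whose values on
isolated attributes are in the corresponding unary relations. -/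
def JoinReduced (Q : Finset (Relation att dom)) (Hv : att → dom → Prop)
    (H : Finset att) (η : Tup att dom) : Set (Tup att dom) :=
  { u | IsTupleOn u ↑(attset Q \ H) ∧
      (∀ R ∈ Q, R.scheme ∩ H = ∅ → restrict u ↑R.scheme ∈ ReducedTuples Q Hv H η R) ∧
      (∀ X ∈ isolatedSet Q H, ∀ x : dom, u X = some x → x ∈ Rpp Q Hv H η X) }


/-- Any finite set of values heavy on a fixed attribute has at most `lam` elements. -/
lemma heavy_subset_card (Q : Finset (Relation att dom)) (lam : ℕ)
    (hlam1 : 1 ≤ lam) (hlam2 : lam ≤ inputSize Q) (X : att)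
    (s : Finset dom) (hs : ∀ x ∈ s, HeavyOn Q lam X x) : s.card ≤ lam := by
  classical
  have hmpos : 0 < inputSize Q := lt_of_lt_of_le hlam1 hlam2
  have hch : ∀ x : dom, ∃ R : Relation att dom, x ∈ s →
      R ∈ Q ∧ X ∈ R.scheme ∧
      (inputSize Q : ℝ) / (lam : ℝ) ≤ ({u ∈ R.tuples | u X = some x}.ncard : ℝ) := by
    intro x
    by_cases hx : x ∈ s
    · obtain ⟨R, hR, h1, h2⟩ := hs x hx
      exact ⟨R, fun _ => ⟨hR, h1, h2⟩⟩
    · exact ⟨⟨∅, ∅, Set.finite_empty, fun u hu => absurd hu (Set.notMem_empty u)⟩,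
        fun h => absurd h hx⟩
  choose f hf using hch
  have hkey : ∀ x ∈ s, inputSize Q ≤ lam * {u ∈ (f x).tuples | u X = some x}.ncard := by
    intro x hx
    obtain ⟨_, _, hineq⟩ := hf x hx
    have hlam0 : (0:ℝ) < lam := by exact_mod_cast hlam1
    have h := (div_le_iff₀ hlam0).mp hineq
    have h2 : (inputSize Q : ℝ) ≤ (lam : ℝ) * {u ∈ (f x).tuples | u X = some x}.ncard := by
      rw [mul_comm]; exact h
    exact_mod_cast h2
  have hsum : ∑ x ∈ s, {u ∈ (f x).tuples | u X = some x}.ncard ≤ inputSize Q := by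
    have hmap : ∀ x ∈ s, f x ∈ Q := fun x hx => (hf x hx).1
    rw [← Finset.sum_fiberwise_of_maps_to hmap
      (fun x => {u ∈ (f x).tuples | u X = some x}.ncard)]
    unfold inputSize
    apply Finset.sum_le_sum
    intro R hR
    have hcongr : ∀ x ∈ s.filter (fun x => f x = R),
        {u ∈ (f x).tuples | u X = some x}.ncard
          = (R.finite.toFinset.filter (fun u => u X = some x)).card := by
      intro x hx
      obtain ⟨hxs, hfx⟩ := Finset.mem_filter.mp hx
      rw [hfx]
      rw [← Set.ncard_coe_finset]
      congr 1
      ext u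
      simp [Set.Finite.mem_toFinset]
    rw [Finset.sum_congr rfl hcongr]
    have hdisj : ∀ x ∈ s.filter (fun x => f x = R), ∀ y ∈ s.filter (fun x => f x = R),
        x ≠ y → Disjoint (R.finite.toFinset.filter (fun u => u X = some x))
          (R.finite.toFinset.filter (fun u => u X = some y)) := by
      intro x _ y _ hxy
      apply Finset.disjoint_left.mpr
      intro u hu1 hu2
      simp only [Finset.mem_filter] at hu1 hu2
      exact hxy (by
        have := hu1.2.symm.trans hu2.2
        exact Option.some_injective _ this)
    rw [← Finset.card_biUnion hdisj]
    have hsub : (s.filter (fun x => f x = R)).biUnion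
        (fun x => R.finite.toFinset.filter (fun u => u X = some x)) ⊆ R.finite.toFinset := by
      intro u hu
      obtain ⟨x, _, hu2⟩ := Finset.mem_biUnion.mp hu
      exact (Finset.mem_filter.mp hu2).1
    calc ((s.filter (fun x => f x = R)).biUnion
        (fun x => R.finite.toFinset.filter (fun u => u X = some x))).card
        ≤ R.finite.toFinset.card := Finset.card_le_card hsub
      _ = R.tuples.ncard := (Set.ncard_eq_toFinset_card _ R.finite).symm
  have hfinal : s.card * inputSize Q ≤ lam * inputSize Q := by
    calc s.card * inputSize Q = ∑ _x ∈ s, inputSize Q := by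
          rw [Finset.sum_const, smul_eq_mul]
      _ ≤ ∑ x ∈ s, lam * {u ∈ (f x).tuples | u X = some x}.ncard := Finset.sum_le_sum hkey
      _ = lam * ∑ x ∈ s, {u ∈ (f x).tuples | u X = some x}.ncard := by rw [Finset.mul_sum]
      _ ≤ lam * inputSize Q := Nat.mul_le_mul_left _ hsum
  exact Nat.le_of_mul_le_mul_right (by
    calc s.card * inputSize Q ≤ lam * inputSize Q := hfinal
    ) hmpos

lemma heavy_finite (Q : Finset (Relation att dom)) (lam : ℕ)
    (hlam1 : 1 ≤ lam) (hlam2 : lam ≤ inputSize Q) (X : att) :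
    {x : dom | HeavyOn Q lam X x}.Finite := by
  by_contra h
  have h' : {x : dom | HeavyOn Q lam X x}.Infinite := h
  obtain ⟨t, hts, htcard⟩ := h'.exists_subset_card_eq (lam + 1)
  have := heavy_subset_card Q lam hlam1 hlam2 X t (fun x hx => hts hx)
  omega

lemma heavy_ncard (Q : Finset (Relation att dom)) (lam : ℕ)
    (hlam1 : 1 ≤ lam) (hlam2 : lam ≤ inputSize Q) (X : att) :
    {x : dom | HeavyOn Q lam X x}.ncard ≤ lam := by
  have hfin := heavy_finite Q lam hlam1 hlam2 X
  rw [Set.ncard_eq_toFinset_card _ hfin]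
  exact heavy_subset_card Q lam hlam1 hlam2 X hfin.toFinset
    (fun x hx => hfin.mem_toFinset.mp hx)

lemma config_finite [Finite att] (Q : Finset (Relation att dom)) (lam : ℕ)
    (hlam1 : 1 ≤ lam) (hlam2 : lam ≤ inputSize Q) (H' : Finset att) :
    (config (HeavyOn Q lam) H').Finite := by
  classical
  letI : Fintype att := Fintype.ofFinite att
  have hfin : ∀ X : att, {x : dom | HeavyOn Q lam X x}.Finite :=
    fun X => heavy_finite Q lam hlam1 hlam2 X
  apply Set.Finite.subset (Finset.finite_toSet (Fintype.piFinset
    (fun X : att => if X ∈ H' then ((hfin X).toFinset.image some) else {(none : Option dom)})))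
  rintro η ⟨h1, h2⟩
  simp only [Finset.mem_coe, Fintype.mem_piFinset]
  intro X
  by_cases hX : X ∈ H'
  · simp only [if_pos hX]
    obtain ⟨x, hx⟩ := Option.isSome_iff_exists.mp ((h1 X).mpr hX)
    rw [hx]
    exact Finset.mem_image.mpr ⟨x, (hfin X).mem_toFinset.mpr (h2 X hX x hx), rfl⟩
  · simp only [if_neg hX, Finset.mem_singleton]
    exact Option.not_isSome_iff_eq_none.mp (fun hs => hX (Finset.mem_coe.mp ((h1 X).mp hs)))

/-- Let `Q` be a simple binary join query, `H ⊆ attset Q`,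
`I` the set of isolated attributes, `J ⊆ I` non-empty,
`Q̃ = {R ∈ Q : scheme(R) ∩ (I \ J) = ∅}` and `H̃ = H ∩ attset Q̃`
(heaviness for `Q̃` taken with the same thresholds as for `Q`).  Then:
(i) for each `η ∈ config(Q, H)`, the restriction `η̃ = η[H̃]` belongs to
`config(Q̃, H̃)` and `Join(Q''_J(η)) = Join(Q̃''_isolated(η̃))`;
(ii) at most `λ^{|H| − |H̃|}` configurations `η` share the same restriction
`η̃`, so that
`Σ_{η} |Join(Q''_J(η))| ≤ λ^{|H| − |H̃|} · Σ_{η̃} |Join(Q̃''_isolated(η̃))|`. -/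
theorem reduction_to_subquery [Finite att] [Countable dom] [Infinite dom]
    (Q : Finset (Relation att dom)) (hS : SimpleQ Q) (hB : BinaryQ Q)
    (lam : ℕ) (hlam1 : 1 ≤ lam) (hlam2 : lam ≤ inputSize Q)
    (H : Finset att) (hH : H ⊆ attset Q)
    (J : Finset att) (hJ : J ⊆ isolatedSet Q H) (hJne : J.Nonempty)
    (Qt : Finset (Relation att dom))
    (hQt : Qt = Q.filter fun R => R.scheme ∩ (isolatedSet Q H \ J) = ∅)
    (Ht : Finset att) (hHt : Ht = H ∩ attset Qt) :
    (∀ η ∈ config (HeavyOn Q lam) H,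
        restrict η ↑Ht ∈ config (HeavyOn Q lam) Ht ∧
        JoinIso Q (HeavyOn Q lam) H η J
          = JoinIso Qt (HeavyOn Q lam) Ht (restrict η ↑Ht) (isolatedSet Qt Ht)) ∧
    (∀ ηt ∈ config (HeavyOn Q lam) Ht,
        {η ∈ config (HeavyOn Q lam) H | restrict η ↑Ht = ηt}.ncard
          ≤ lam ^ (H.card - Ht.card)) ∧
    (∑ᶠ η ∈ config (HeavyOn Q lam) H, (JoinIso Q (HeavyOn Q lam) H η J).ncard)
      ≤ lam ^ (H.card - Ht.card)
          * ∑ᶠ ηt ∈ config (HeavyOn Q lam) Ht,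
              (JoinIso Qt (HeavyOn Q lam) Ht ηt (isolatedSet Qt Ht)).ncard := by
  classical
  letI : Fintype att := Fintype.ofFinite att
  have hQtsub : Qt ⊆ Q := by rw [hQt]; exact Finset.filter_subset _ _
  have hHtH : Ht ⊆ H := by rw [hHt]; exact Finset.inter_subset_left
  -- facts about isolated vertices
  have hJfact : ∀ X ∈ J, X ∈ attset Q ∧ X ∉ H ∧
      ∀ R ∈ Q, X ∈ R.scheme → R.scheme \ H = {X} := by
    intro X hX
    have h := hJ hX
    simp only [isolatedSet, Finset.mem_filter, Finset.mem_sdiff] at h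
    exact ⟨h.1.1, h.1.2, h.2⟩
  -- L1
  have hL1 : ∀ X ∈ J, ∀ R ∈ Q, X ∈ R.scheme →
      R ∈ Qt ∧ R.scheme ∩ H = R.scheme ∩ Ht ∧ R.scheme \ H = {X} ∧
      R.scheme \ Ht = {X} ∧ IsCross H R.scheme ∧ IsCross Ht R.scheme := by
    intro X hXJ R hRQ hXR
    obtain ⟨hXatt, hXnH, hiso⟩ := hJfact X hXJ
    have hsdh : R.scheme \ H = {X} := hiso R hRQ hXR
    have hmemH : ∀ Z ∈ R.scheme, Z ∉ H → Z = X := by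
      intro Z hZ hZH
      have hm : Z ∈ R.scheme \ H := Finset.mem_sdiff.mpr ⟨hZ, hZH⟩
      rw [hsdh] at hm
      exact Finset.mem_singleton.mp hm
    have hRQt : R ∈ Qt := by
      rw [hQt, Finset.mem_filter]
      refine ⟨hRQ, ?_⟩
      ext Z
      simp only [Finset.mem_inter, Finset.mem_sdiff, Finset.notMem_empty, iff_false, not_and]
      intro hZR hZI hZnJ
      have hZnH : Z ∉ H := (Finset.mem_sdiff.mp (Finset.mem_filter.mp hZI).1).2
      exact hZnJ ((hmemH Z hZR hZnH) ▸ hXJ)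
    have hHt' : ∀ Z ∈ R.scheme, Z ∈ H → Z ∈ Ht := by
      intro Z hZR hZH
      rw [hHt, Finset.mem_inter]
      exact ⟨hZH, Finset.mem_biUnion.mpr ⟨R, hRQt, hZR⟩⟩
    have hinter : R.scheme ∩ H = R.scheme ∩ Ht := by
      ext Z
      simp only [Finset.mem_inter]
      exact ⟨fun ⟨h1, h2⟩ => ⟨h1, hHt' Z h1 h2⟩, fun ⟨h1, h2⟩ => ⟨h1, hHtH h2⟩⟩
    have hsdt : R.scheme \ Ht = {X} := by
      ext Z
      simp only [Finset.mem_sdiff, Finset.mem_singleton]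
      constructor
      · rintro ⟨h1, h2⟩
        exact hmemH Z h1 (fun hZH => h2 (hHt' Z h1 hZH))
      · rintro rfl
        exact ⟨hXR, fun hXHt => hXnH (hHtH hXHt)⟩
    have hcard := hB R hRQ
    have hYex : (R.scheme ∩ H).Nonempty := by
      by_contra hemp
      rw [Finset.not_nonempty_iff_eq_empty] at hemp
      have hsub : R.scheme ⊆ R.scheme \ H := by
        intro Z hZ
        refine Finset.mem_sdiff.mpr ⟨hZ, fun hZH => ?_⟩
        have : Z ∈ R.scheme ∩ H := Finset.mem_inter.mpr ⟨hZ, hZH⟩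
        rw [hemp] at this
        exact absurd this (Finset.notMem_empty Z)
      rw [hsdh] at hsub
      have := Finset.card_le_card hsub
      rw [hcard, Finset.card_singleton] at this
      omega
    have hcross : IsCross H R.scheme :=
      ⟨hYex, by rw [hsdh]; exact ⟨X, Finset.mem_singleton_self X⟩⟩
    have hcrosst : IsCross Ht R.scheme :=
      ⟨by rw [← hinter]; exact hYex, by rw [hsdt]; exact ⟨X, Finset.mem_singleton_self X⟩⟩
    exact ⟨hRQt, hinter, hsdh, hsdt, hcross, hcrosst⟩
  -- L2 : isolatedSet Qt Ht = J
  have hL2 : isolatedSet Qt Ht = J := by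
    ext X
    constructor
    · intro hX
      simp only [isolatedSet, Finset.mem_filter, Finset.mem_sdiff] at hX
      obtain ⟨⟨hXat, hXnHt⟩, hisoT⟩ := hX
      have hXnH : X ∉ H := fun hXH => hXnHt (by
        rw [hHt, Finset.mem_inter]; exact ⟨hXH, hXat⟩)
      obtain ⟨R0, hR0Qt, hXR0⟩ := Finset.mem_biUnion.mp hXat
      have hXattQ : X ∈ attset Q := Finset.mem_biUnion.mpr ⟨R0, hQtsub hR0Qt, hXR0⟩
      have hXI : X ∈ isolatedSet Q H := by
        by_contra hXnI
        have hnall : ¬ (∀ S ∈ Q, X ∈ S.scheme → S.scheme \ H = {X}) := by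
          intro hall
          exact hXnI (Finset.mem_filter.mpr ⟨Finset.mem_sdiff.mpr ⟨hXattQ, hXnH⟩, hall⟩)
        push_neg at hnall
        obtain ⟨S, hSQ, hXS, hSne⟩ := hnall
        have hXmem : X ∈ S.scheme \ H := Finset.mem_sdiff.mpr ⟨hXS, hXnH⟩
        have hZex : ∃ Z ∈ S.scheme \ H, Z ≠ X := by
          by_contra hc
          push_neg at hc
          apply hSne
          apply Finset.Subset.antisymm
          · intro Z hZ
            rw [Finset.mem_singleton]
            exact hc Z hZ
          · intro Z hZ
            rw [Finset.mem_singleton] at hZ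
            subst hZ
            exact hXmem
        obtain ⟨Z, hZm, hZX⟩ := hZex
        obtain ⟨hZS, hZnH⟩ := Finset.mem_sdiff.mp hZm
        have hSQt : S ∈ Qt := by
          rw [hQt, Finset.mem_filter]
          refine ⟨hSQ, ?_⟩
          ext W
          simp only [Finset.mem_inter, Finset.mem_sdiff, Finset.notMem_empty, iff_false,
            not_and]
          intro hWS hWI _
          have hW := (Finset.mem_filter.mp hWI).2 S hSQ hWS
          have e1 : X = W := Finset.mem_singleton.mp (hW ▸ hXmem)
          have e2 : Z = W := Finset.mem_singleton.mp (hW ▸ hZm)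
          exact hZX (e2.trans e1.symm)
        have hxx := hisoT S hSQt hXS
        have hZmt : Z ∈ S.scheme \ Ht := Finset.mem_sdiff.mpr ⟨hZS, fun h => hZnH (hHtH h)⟩
        rw [hxx] at hZmt
        exact hZX (Finset.mem_singleton.mp hZmt)
      by_contra hXnJ
      have hR0f : R0 ∈ Q.filter (fun R => R.scheme ∩ (isolatedSet Q H \ J) = ∅) := by
        rw [← hQt]; exact hR0Qt
      have hXmem2 : X ∈ R0.scheme ∩ (isolatedSet Q H \ J) :=
        Finset.mem_inter.mpr ⟨hXR0, Finset.mem_sdiff.mpr ⟨hXI, hXnJ⟩⟩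
      rw [(Finset.mem_filter.mp hR0f).2] at hXmem2
      exact absurd hXmem2 (Finset.notMem_empty X)
    · intro hXJ
      obtain ⟨hXatt, hXnH, _⟩ := hJfact X hXJ
      obtain ⟨R, hRQ, hXR⟩ := Finset.mem_biUnion.mp hXatt
      obtain ⟨hRQt, _, _, hsdt, _, _⟩ := hL1 X hXJ R hRQ hXR
      simp only [isolatedSet, Finset.mem_filter, Finset.mem_sdiff]
      refine ⟨⟨Finset.mem_biUnion.mpr ⟨R, hRQt, hXR⟩, fun h => hXnH (hHtH h)⟩, ?_⟩
      intro S hSQt hXS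
      exact (hL1 X hXJ S (hQtsub hSQt) hXS).2.2.2.1
  -- L3a : residual equivalence
  have hRes : ∀ X ∈ J, ∀ (η : Tup att dom), ∀ R ∈ Q, X ∈ R.scheme → ∀ x : dom,
      (singletonTup X x ∈ ResidualTuples Q (HeavyOn Q lam) H η R ↔
       singletonTup X x ∈ ResidualTuples Qt (HeavyOn Q lam) Ht (restrict η ↑Ht) R) := by
    intro X hXJ η R hRQ hXR x
    obtain ⟨hRQt, hinter, hsdh, hsdt, _, _⟩ := hL1 X hXJ R hRQ hXR
    constructor
    · rintro ⟨w, hw, h1, h2, h3⟩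
      refine ⟨w, hw, ?_, ?_, ?_⟩
      · intro A hA
        have hAHt : A ∈ Ht := (Finset.mem_inter.mp hA).2
        have hAH : A ∈ R.scheme ∩ H := by rw [hinter]; exact hA
        rw [h1 A hAH]
        simp [restrict, hAHt]
      · intro B hB y hy
        have hBs : B ∈ R.scheme := (Finset.mem_sdiff.mp hB).1
        have hBX : B = X := by rw [hsdt] at hB; exact Finset.mem_singleton.mp hB
        obtain ⟨hnh, _⟩ := h2 B (by rw [hsdh]; exact Finset.mem_singleton.mpr hBX) y hy
        exact ⟨hnh, ⟨R, hRQt, B, hBs, w, hw, hy⟩⟩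
      · rw [hsdt, ← hsdh]; exact h3
    · rintro ⟨w, hw, h1, h2, h3⟩
      refine ⟨w, hw, ?_, ?_, ?_⟩
      · intro A hA
        have hAt : A ∈ R.scheme ∩ Ht := by rw [← hinter]; exact hA
        have hAHt : A ∈ Ht := (Finset.mem_inter.mp hAt).2
        simpa [restrict, hAHt] using h1 A hAt
      · intro B hB y hy
        have hBs : B ∈ R.scheme := (Finset.mem_sdiff.mp hB).1
        have hBX : B = X := by rw [hsdh] at hB; exact Finset.mem_singleton.mp hB
        obtain ⟨hnh, _⟩ := h2 B (by rw [hsdt]; exact Finset.mem_singleton.mpr hBX) y hy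
        exact ⟨hnh, ⟨R, hRQ, B, hBs, w, hw, hy⟩⟩
      · rw [hsdh, ← hsdt]; exact h3
  -- Rpp equality
  have hRpp : ∀ X ∈ J, ∀ η : Tup att dom,
      Rpp Q (HeavyOn Q lam) H η X = Rpp Qt (HeavyOn Q lam) Ht (restrict η ↑Ht) X := by
    intro X hXJ η
    ext x
    simp only [Rpp, Set.mem_setOf_eq]
    constructor
    · intro h R hRQt hcr hXR
      exact (hRes X hXJ η R (hQtsub hRQt) hXR x).mp
        (h R (hQtsub hRQt) (hL1 X hXJ R (hQtsub hRQt) hXR).2.2.2.2.1 hXR)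
    · intro h R hRQ hcr hXR
      obtain ⟨hRQt, _, _, _, _, hcrt⟩ := hL1 X hXJ R hRQ hXR
      exact (hRes X hXJ η R hRQ hXR x).mpr (h R hRQt hcrt hXR)
  -- config restriction
  have hconf : ∀ η ∈ config (HeavyOn Q lam) H, restrict η ↑Ht ∈ config (HeavyOn Q lam) Ht := by
    rintro η ⟨hη1, hη2⟩
    constructor
    · intro x
      by_cases hx : x ∈ Ht
      · simp only [restrict, if_pos (Finset.mem_coe.mpr hx)]
        exact iff_of_true ((hη1 x).mpr (Finset.mem_coe.mpr (hHtH hx))) (Finset.mem_coe.mpr hx)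
      · simp only [restrict, if_neg (fun h => hx (Finset.mem_coe.mp h))]
        simp only [Option.isSome_none, Bool.false_eq_true, false_iff]
        exact fun h => hx (Finset.mem_coe.mp h)
    · intro x hx d hd
      simp only [restrict, if_pos (Finset.mem_coe.mpr hx)] at hd
      exact hη2 x (hHtH hx) d hd
  -- JoinIso equality
  have hJoin : ∀ η : Tup att dom,
      JoinIso Q (HeavyOn Q lam) H η J
        = JoinIso Qt (HeavyOn Q lam) Ht (restrict η ↑Ht) (isolatedSet Qt Ht) := by
    intro η
    rw [hL2]
    ext u
    simp only [JoinIso, Set.mem_setOf_eq]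
    constructor
    · rintro ⟨h1, h2⟩
      exact ⟨h1, fun X hX x hx => (hRpp X hX η) ▸ h2 X hX x hx⟩
    · rintro ⟨h1, h2⟩
      exact ⟨h1, fun X hX x hx => (hRpp X hX η).symm ▸ h2 X hX x hx⟩
  -- fiber bound
  have hfib : ∀ ηt ∈ config (HeavyOn Q lam) Ht,
      {η ∈ config (HeavyOn Q lam) H | restrict η ↑Ht = ηt}.ncard
        ≤ lam ^ (H.card - Ht.card) := by
    intro ηt hηt
    have hηt1 := hηt.1
    have hfin : ∀ X : att, {x : dom | HeavyOn Q lam X x}.Finite :=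
      fun X => heavy_finite Q lam hlam1 hlam2 X
    set g : att → Finset (Option dom) := fun X =>
      if X ∈ H \ Ht then ((hfin X).toFinset.image some) else {ηt X} with hg
    have hsub : {η ∈ config (HeavyOn Q lam) H | restrict η ↑Ht = ηt}
        ⊆ ↑(Fintype.piFinset g) := by
      rintro η ⟨⟨hη1, hη2⟩, hrest⟩
      simp only [Finset.mem_coe, Fintype.mem_piFinset]
      intro X
      by_cases hX : X ∈ H \ Ht
      · simp only [hg, if_pos hX]
        obtain ⟨hXH, hXnHt⟩ := Finset.mem_sdiff.mp hX
        obtain ⟨x, hx⟩ := Option.isSome_iff_exists.mp ((hη1 X).mpr hXH)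
        rw [hx]
        exact Finset.mem_image.mpr ⟨x, (hfin X).mem_toFinset.mpr (hη2 X hXH x hx), rfl⟩
      · simp only [hg, if_neg hX, Finset.mem_singleton]
        by_cases hXHt : X ∈ Ht
        · rw [← hrest]
          simp [restrict, hXHt]
        · have hXnH : X ∉ H := fun h => hX (Finset.mem_sdiff.mpr ⟨h, hXHt⟩)
          have e1 : η X = none := Option.not_isSome_iff_eq_none.mp
            (fun hs => hXnH (Finset.mem_coe.mp ((hη1 X).mp hs)))
          have e2 : ηt X = none := Option.not_isSome_iff_eq_none.mp
            (fun hs => hXHt (Finset.mem_coe.mp ((hηt1 X).mp hs)))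
          rw [e1, e2]
    calc {η ∈ config (HeavyOn Q lam) H | restrict η ↑Ht = ηt}.ncard
        ≤ (↑(Fintype.piFinset g) : Set (Tup att dom)).ncard :=
          Set.ncard_le_ncard hsub (Finset.finite_toSet _)
      _ = (Fintype.piFinset g).card := Set.ncard_coe_finset _
      _ = ∏ X, (g X).card := Fintype.card_piFinset g
      _ ≤ ∏ X, (if X ∈ H \ Ht then lam else 1) := by
          apply Finset.prod_le_prod'
          intro X _
          by_cases hX : X ∈ H \ Ht
          · simp only [hg, if_pos hX]
            calc ((hfin X).toFinset.image some).card ≤ (hfin X).toFinset.card :=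
                  Finset.card_image_le
              _ = {x : dom | HeavyOn Q lam X x}.ncard :=
                  (Set.ncard_eq_toFinset_card _ (hfin X)).symm
              _ ≤ lam := heavy_ncard Q lam hlam1 hlam2 X
          · have hX' : ¬ (X ∈ H ∧ X ∉ Ht) := by simpa [Finset.mem_sdiff] using hX
            simp [hg, hX']
      _ = lam ^ (H \ Ht).card := by
          rw [Finset.prod_ite_mem, Finset.univ_inter, Finset.prod_const]
      _ = lam ^ (H.card - Ht.card) := by rw [Finset.card_sdiff_of_subset hHtH]
  refine ⟨fun η hη => ⟨hconf η hη, hJoin η⟩, hfib, ?_⟩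
  -- the sum inequality
  have hAfin := config_finite Q lam hlam1 hlam2 H
  have hBfin := config_finite Q lam hlam1 hlam2 Ht
  rw [← hAfin.coe_toFinset, finsum_mem_coe_finset, ← hBfin.coe_toFinset, finsum_mem_coe_finset]
  have hmapsto : ∀ η ∈ hAfin.toFinset, restrict η ↑Ht ∈ hBfin.toFinset :=
    fun η hη => hBfin.mem_toFinset.mpr (hconf η (hAfin.mem_toFinset.mp hη))
  calc ∑ η ∈ hAfin.toFinset, (JoinIso Q (HeavyOn Q lam) H η J).ncard
      = ∑ η ∈ hAfin.toFinset,
          (JoinIso Qt (HeavyOn Q lam) Ht (restrict η ↑Ht) (isolatedSet Qt Ht)).ncard := by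
        exact Finset.sum_congr rfl (fun η _ => by rw [hJoin η])
    _ = ∑ b ∈ hBfin.toFinset, ∑ η ∈ hAfin.toFinset.filter (fun η => restrict η ↑Ht = b),
          (JoinIso Qt (HeavyOn Q lam) Ht (restrict η ↑Ht) (isolatedSet Qt Ht)).ncard :=
        (Finset.sum_fiberwise_of_maps_to hmapsto _).symm
    _ ≤ ∑ b ∈ hBfin.toFinset, lam ^ (H.card - Ht.card)
          * (JoinIso Qt (HeavyOn Q lam) Ht b (isolatedSet Qt Ht)).ncard := by
        apply Finset.sum_le_sum
        intro b hb
        have heq : ∑ η ∈ hAfin.toFinset.filter (fun η => restrict η ↑Ht = b),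
            (JoinIso Qt (HeavyOn Q lam) Ht (restrict η ↑Ht) (isolatedSet Qt Ht)).ncard
            = (hAfin.toFinset.filter (fun η => restrict η ↑Ht = b)).card
              * (JoinIso Qt (HeavyOn Q lam) Ht b (isolatedSet Qt Ht)).ncard := by
          rw [Finset.sum_congr rfl
            (fun η hη => by rw [(Finset.mem_filter.mp hη).2]), Finset.sum_const, smul_eq_mul]
        rw [heq]
        apply Nat.mul_le_mul_right
        have hset : {η ∈ config (HeavyOn Q lam) H | restrict η ↑Ht = b}
            = ↑(hAfin.toFinset.filter (fun η => restrict η ↑Ht = b)) := by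
          ext η
          simp only [Set.mem_setOf_eq, Finset.coe_filter, hAfin.mem_toFinset]
        have h := hfib b (hBfin.mem_toFinset.mp hb)
        rw [hset, Set.ncard_coe_finset] at h
        exact h
    _ = lam ^ (H.card - Ht.card) * ∑ b ∈ hBfin.toFinset,
          (JoinIso Qt (HeavyOn Q lam) Ht b (isolatedSet Qt Ht)).ncard := by
        rw [Finset.mul_sum]

end BinaryJoins
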